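/- Suppose (U^n) solves the implicit upwind scheme. Assume that for every n ∈ ℕ the sequence j ↦ |U^n_{j+1} − U^n_j| is summable over ℤ, and that for every n ∈ ℕ the sequences j ↦ |f⁺(U^n_{j+1}) − f⁺(U^n_j)| and j ↦ |f⁻(U^n_{j+1}) − f⁻(U^n_j)| are summable over ℤ. Then the implicit upwind scheme is unconditionally total-variation diminishing: for every n ∈ ℕ, TV[U^n] = Σ_{j∈ℤ} |U^n_{j+1} − U^n_j| ≤ Σ_{j∈ℤ} |U^0_{j+1} − U^0_j| = TV[U^0], with no CFL condition on τ and h. -/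

import Mathlib

open scoped BigOperators

/-- The L1 coefficients `c^{n+1}_k` for the discrete Caputo derivative:
`c^{n+1}_0 = (n+1)^{1-α} - n^{1-α}` and, for `1 ≤ k ≤ n`,
`c^{n+1}_k = 2(n+1-k)^{1-α} - (n+2-k)^{1-α} - (n-k)^{1-α}`. -/
noncomputable def caputoCoeff (α : ℝ) (n k : ℕ) : ℝ :=
  if k = 0 then ((n : ℝ) + 1) ^ (1 - α) - (n : ℝ) ^ (1 - α)
  else 2 * ((n : ℝ) + 1 - (k : ℝ)) ^ (1 - α) - ((n : ℝ) + 2 - (k : ℝ)) ^ (1 - α)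
    - ((n : ℝ) - (k : ℝ)) ^ (1 - α)

/-- `U` solves the implicit upwind scheme with time steps indexed by `ℕ`
and space indexed by `ℤ`. -/
def SolvesImplicitScheme (α δ : ℝ) (fp fm : ℝ → ℝ) (U : ℕ → ℤ → ℝ) : Prop :=
  ∀ (n : ℕ) (j : ℤ),
    U (n + 1) j = (∑ k ∈ Finset.range (n + 1), caputoCoeff α n k * U k j)
      - δ * (fp (U (n + 1) j) - fp (U (n + 1) (j - 1)))
      - δ * (fm (U (n + 1) (j + 1)) - fm (U (n + 1) j))

lemma rpow_midpoint {p : ℝ} (hp0 : 0 < p) (hp1 : p < 1) {x : ℝ} (hx : 0 ≤ x) :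
    (x + 2) ^ p + x ^ p ≤ 2 * (x + 1) ^ p := by
  have h := (Real.strictConcaveOn_rpow hp0 hp1).concaveOn
  have h2 : (0:ℝ) ≤ x + 2 := by linarith
  have := h.2 (Set.mem_Ici.2 hx) (Set.mem_Ici.2 h2) (by norm_num : (0:ℝ) ≤ 1/2)
    (by norm_num : (0:ℝ) ≤ 1/2) (by norm_num)
  simp only [smul_eq_mul] at this
  have hmid : (1/2 : ℝ) * x + (1/2) * (x + 2) = x + 1 := by ring
  rw [hmid] at this
  linarith

lemma caputoCoeff_nonneg {α : ℝ} (hα : α ∈ Set.Ioo (0:ℝ) 1) (n : ℕ) {k : ℕ} (hk : k ≤ n) :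
    0 ≤ caputoCoeff α n k := by
  obtain ⟨hα0, hα1⟩ := hα
  have hp0 : 0 < 1 - α := by linarith
  have hp1 : 1 - α < 1 := by linarith
  unfold caputoCoeff
  split_ifs with h0
  · have : (n : ℝ) ≤ (n : ℝ) + 1 := by linarith
    have := Real.rpow_le_rpow (Nat.cast_nonneg n) this hp0.le
    linarith
  · have hk1 : 1 ≤ k := Nat.one_le_iff_ne_zero.2 h0
    have hx : (0:ℝ) ≤ (n : ℝ) - (k : ℝ) := by
      have : (k : ℝ) ≤ (n : ℝ) := by exact_mod_cast hk
      linarith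
    have := rpow_midpoint hp0 hp1 hx
    have e1 : (n : ℝ) - (k : ℝ) + 2 = (n : ℝ) + 2 - (k : ℝ) := by ring
    have e2 : (n : ℝ) - (k : ℝ) + 1 = (n : ℝ) + 1 - (k : ℝ) := by ring
    rw [e1, e2] at this
    linarith


lemma caputoCoeff_sum {α : ℝ} (hα : α ∈ Set.Ioo (0:ℝ) 1) (n : ℕ) :
    ∑ k ∈ Finset.range (n + 1), caputoCoeff α n k = 1 := by
  obtain ⟨hα0, hα1⟩ := hα
  set p := 1 - α with hp
  have hp0 : p ≠ 0 := by simp [hp]; intro hh; linarith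
  rw [Finset.sum_range_succ']
  have hterm : ∀ k ∈ Finset.range n, caputoCoeff α n (k + 1)
      = (((n:ℝ) - k) ^ p - ((n:ℝ) + 1 - k) ^ p) + (((n:ℝ) - k) ^ p - ((n:ℝ) - 1 - k) ^ p) := by
    intro k _
    unfold caputoCoeff
    rw [if_neg (Nat.succ_ne_zero k)]
    rw [hp]
    push_cast
    ring_nf
  rw [Finset.sum_congr rfl hterm, Finset.sum_add_distrib]
  have T1 : ∑ k ∈ Finset.range n, (((n:ℝ) - k) ^ p - ((n:ℝ) + 1 - k) ^ p)
      = 1 - ((n:ℝ) + 1) ^ p := by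
    have e : ∀ k ∈ Finset.range n, (((n:ℝ) - k) ^ p - ((n:ℝ) + 1 - k) ^ p)
        = -(((fun m : ℕ => ((n:ℝ) + 1 - m) ^ p) k) - ((fun m : ℕ => ((n:ℝ) + 1 - m) ^ p) (k+1))) := by
      intro k _; push_cast; ring_nf
    rw [Finset.sum_congr rfl e, Finset.sum_neg_distrib, Finset.sum_range_sub']
    have e0 : (n:ℝ) + 1 - ((0:ℕ):ℝ) = (n:ℝ) + 1 := by push_cast; ring
    have en : (n:ℝ) + 1 - ((n:ℕ):ℝ) = 1 := by push_cast; ring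
    rw [e0, en, Real.one_rpow]
    ring
  have T2 : ∑ k ∈ Finset.range n, (((n:ℝ) - k) ^ p - ((n:ℝ) - 1 - k) ^ p)
      = (n:ℝ) ^ p := by
    have e : ∀ k ∈ Finset.range n, (((n:ℝ) - k) ^ p - ((n:ℝ) - 1 - k) ^ p)
        = ((fun m : ℕ => ((n:ℝ) - m) ^ p) k) - ((fun m : ℕ => ((n:ℝ) - m) ^ p) (k+1)) := by
      intro k _; push_cast; ring_nf
    rw [Finset.sum_congr rfl e, Finset.sum_range_sub']
    have e0 : (n:ℝ) - ((0:ℕ):ℝ) = (n:ℝ) := by push_cast; ring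
    have en : (n:ℝ) - ((n:ℕ):ℝ) = 0 := by push_cast; ring
    rw [e0, en, Real.zero_rpow hp0]
    ring
  rw [T1, T2]
  unfold caputoCoeff
  rw [if_pos rfl]
  ring

lemma abs_add_sub (a b c : ℝ) : |a + b - c| ≤ |a| + |b| + |c| := by
  calc |a + b - c| ≤ |a + b| + |c| := abs_sub _ _
    _ ≤ |a| + |b| + |c| := by linarith [abs_add_le a b]

lemma step_abs (δ v p m : ℝ) (hδ : 0 ≤ δ)
    (h1 : 0 ≤ v → (0 ≤ p ∧ m ≤ 0)) (h2 : v ≤ 0 → (p ≤ 0 ∧ 0 ≤ m)) :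
    |v| + δ * |p| + δ * |m| ≤ |v + δ * p - δ * m| := by
  rcases le_total 0 v with hv | hv
  · obtain ⟨hpp, hmm⟩ := h1 hv
    rw [abs_of_nonneg hv, abs_of_nonneg hpp, abs_of_nonpos hmm,
      abs_of_nonneg (by nlinarith : (0:ℝ) ≤ v + δ * p - δ * m)]
    nlinarith
  · obtain ⟨hpp, hmm⟩ := h2 hv
    rw [abs_of_nonpos hv, abs_of_nonpos hpp, abs_of_nonneg hmm,
      abs_of_nonpos (by nlinarith : v + δ * p - δ * m ≤ 0)]
    nlinarith

/-- difference of flux of consecutive values -/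
def Dfun (g : ℝ → ℝ) (U : ℕ → ℤ → ℝ) (n : ℕ) (j : ℤ) : ℝ := g (U n (j + 1)) - g (U n j)

set_option maxHeartbeats 1000000 in
lemma tv_step {α δ : ℝ} (hα : α ∈ Set.Ioo (0:ℝ) 1) (hδ0 : 0 ≤ δ)
    {fp fm : ℝ → ℝ} (hfpm : Monotone fp) (hfma : Antitone fm)
    {U : ℕ → ℤ → ℝ} (hU : SolvesImplicitScheme α δ fp fm U)
    (hsum : ∀ n : ℕ, Summable (fun j : ℤ => |U n (j + 1) - U n j|))
    (hfpsum : ∀ n : ℕ, Summable (fun j : ℤ => |fp (U n (j + 1)) - fp (U n j)|))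
    (hfmsum : ∀ n : ℕ, Summable (fun j : ℤ => |fm (U n (j + 1)) - fm (U n j)|))
    (n : ℕ) :
    ∑' j : ℤ, |U (n+1) (j+1) - U (n+1) j|
      ≤ ∑ k ∈ Finset.range (n+1), caputoCoeff α n k * ∑' j : ℤ, |U k (j+1) - U k j| := by
  set P : ℤ → ℝ := Dfun fp U (n+1) with hPdef
  set M : ℤ → ℝ := Dfun fm U (n+1) with hMdef
  have hP : ∀ j : ℤ, P j = fp (U (n+1) (j+1)) - fp (U (n+1) j) := fun j => rfl
  have hM : ∀ j : ℤ, M j = fm (U (n+1) (j+1)) - fm (U (n+1) j) := fun j => rfl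
  -- the difference equation
  have eqn : ∀ j : ℤ, U (n+1) (j+1) - U (n+1) j + δ * P j - δ * M j
      = (∑ k ∈ Finset.range (n+1), caputoCoeff α n k * (U k (j+1) - U k j))
        + δ * P (j-1) - δ * M (j+1) := by
    intro j
    have e1 := hU n (j+1)
    have e2 := hU n j
    have hs : ∑ k ∈ Finset.range (n+1), caputoCoeff α n k * (U k (j+1) - U k j)
        = (∑ k ∈ Finset.range (n+1), caputoCoeff α n k * U k (j+1))
          - (∑ k ∈ Finset.range (n+1), caputoCoeff α n k * U k j) := by
      rw [← Finset.sum_sub_distrib]; exact Finset.sum_congr rfl fun k _ => by ring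
    have hj1 : j + 1 - 1 = j := by ring
    have hj2 : j - 1 + 1 = j := by ring
    rw [hj1] at e1
    rw [hP j, hP (j-1), hM j, hM (j+1), hj2, hs]
    linarith [e1, e2]
  -- pointwise inequality
  have pw : ∀ j : ℤ, |U (n+1) (j+1) - U (n+1) j| + δ * |P j| + δ * |M j|
      ≤ (∑ k ∈ Finset.range (n+1), caputoCoeff α n k * |U k (j+1) - U k j|)
        + δ * |P (j-1)| + δ * |M (j+1)| := by
    intro j
    have h1 : 0 ≤ U (n+1) (j+1) - U (n+1) j → 0 ≤ P j ∧ M j ≤ 0 := by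
      intro hv
      have hle : U (n+1) j ≤ U (n+1) (j+1) := by linarith
      exact ⟨sub_nonneg.2 (hfpm hle), sub_nonpos.2 (hfma hle)⟩
    have h2 : U (n+1) (j+1) - U (n+1) j ≤ 0 → P j ≤ 0 ∧ 0 ≤ M j := by
      intro hv
      have hle : U (n+1) (j+1) ≤ U (n+1) j := by linarith
      exact ⟨sub_nonpos.2 (hfpm hle), sub_nonneg.2 (hfma hle)⟩
    calc |U (n+1) (j+1) - U (n+1) j| + δ * |P j| + δ * |M j|
        ≤ |U (n+1) (j+1) - U (n+1) j + δ * P j - δ * M j| := step_abs δ _ _ _ hδ0 h1 h2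
      _ = |(∑ k ∈ Finset.range (n+1), caputoCoeff α n k * (U k (j+1) - U k j))
            + δ * P (j-1) - δ * M (j+1)| := by rw [eqn j]
      _ ≤ |∑ k ∈ Finset.range (n+1), caputoCoeff α n k * (U k (j+1) - U k j)|
            + |δ * P (j-1)| + |δ * M (j+1)| := abs_add_sub _ _ _
      _ ≤ (∑ k ∈ Finset.range (n+1), caputoCoeff α n k * |U k (j+1) - U k j|)
            + δ * |P (j-1)| + δ * |M (j+1)| := by
          have hsum_abs : |∑ k ∈ Finset.range (n+1), caputoCoeff α n k * (U k (j+1) - U k j)|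
              ≤ ∑ k ∈ Finset.range (n+1), caputoCoeff α n k * |U k (j+1) - U k j| := by
            refine (Finset.abs_sum_le_sum_abs _ _).trans (le_of_eq (Finset.sum_congr rfl ?_))
            intro k hk
            rw [abs_mul, abs_of_nonneg (caputoCoeff_nonneg hα n (Nat.lt_succ_iff.1 (Finset.mem_range.1 hk)))]
          rw [abs_mul δ (P (j-1)), abs_mul δ (M (j+1)), abs_of_nonneg hδ0]
          linarith
  -- summability
  have SP : Summable (fun j : ℤ => |P j|) := hfpsum (n+1)
  have SM : Summable (fun j : ℤ => |M j|) := hfmsum (n+1)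
  have SPs : Summable (fun j : ℤ => |P (j-1)|) := (Equiv.subRight (1:ℤ)).summable_iff.2 SP
  have SMs : Summable (fun j : ℤ => |M (j+1)|) := (Equiv.addRight (1:ℤ)).summable_iff.2 SM
  have sumLHS : Summable (fun j : ℤ => |U (n+1) (j+1) - U (n+1) j| + δ * |P j| + δ * |M j|) :=
    ((hsum (n+1)).add (SP.mul_left δ)).add (SM.mul_left δ)
  have sumS : Summable (fun j : ℤ => ∑ k ∈ Finset.range (n+1), caputoCoeff α n k * |U k (j+1) - U k j|) :=
    summable_sum (fun k _ => (hsum k).mul_left _)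
  have sumRHS : Summable (fun j : ℤ =>
      (∑ k ∈ Finset.range (n+1), caputoCoeff α n k * |U k (j+1) - U k j|)
        + δ * |P (j-1)| + δ * |M (j+1)|) :=
    (sumS.add (SPs.mul_left δ)).add (SMs.mul_left δ)
  have key := Summable.tsum_le_tsum pw sumLHS sumRHS
  rw [Summable.tsum_add ((hsum (n+1)).add (SP.mul_left δ)) (SM.mul_left δ),
      Summable.tsum_add (hsum (n+1)) (SP.mul_left δ),
      Summable.tsum_add (sumS.add (SPs.mul_left δ)) (SMs.mul_left δ),
      Summable.tsum_add sumS (SPs.mul_left δ),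
      tsum_mul_left, tsum_mul_left, tsum_mul_left, tsum_mul_left,
      Summable.tsum_finsetSum (fun k _ => (hsum k).mul_left _)] at key
  have shiftP : ∑' j : ℤ, |P (j-1)| = ∑' j : ℤ, |P j| :=
    (Equiv.subRight (1:ℤ)).tsum_eq (fun j => |P j|)
  have shiftM : ∑' j : ℤ, |M (j+1)| = ∑' j : ℤ, |M j| :=
    (Equiv.addRight (1:ℤ)).tsum_eq (fun j => |M j|)
  rw [shiftP, shiftM] at key
  have hinner : ∀ k ∈ Finset.range (n+1),
      ∑' j : ℤ, caputoCoeff α n k * |U k (j+1) - U k j|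
        = caputoCoeff α n k * ∑' j : ℤ, |U k (j+1) - U k j| := fun k _ => tsum_mul_left
  rw [Finset.sum_congr rfl hinner] at key
  linarith

/-- the implicit upwind scheme is unconditionally TVD:
`TV[U^n] ≤ TV[U^0]` for all `n`, with no CFL condition on `τ` and `h`. -/
theorem implicit_upwind_tvd (α τ h : ℝ) (hα : α ∈ Set.Ioo (0 : ℝ) 1)
    (hτ : 0 < τ) (hh : 0 < h) (δ : ℝ) (hδ : δ = τ ^ α / (h * Real.Gamma (2 - α)))
    (fp fm : ℝ → ℝ) (hfp : Differentiable ℝ fp) (hfm : Differentiable ℝ fm)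
    (hfp' : ∀ x, 0 ≤ deriv fp x) (hfm' : ∀ x, deriv fm x ≤ 0)
    (U : ℕ → ℤ → ℝ) (hU : SolvesImplicitScheme α δ fp fm U)
    (hsum : ∀ n : ℕ, Summable (fun j : ℤ => |U n (j + 1) - U n j|))
    (hfpsum : ∀ n : ℕ, Summable (fun j : ℤ => |fp (U n (j + 1)) - fp (U n j)|))
    (hfmsum : ∀ n : ℕ, Summable (fun j : ℤ => |fm (U n (j + 1)) - fm (U n j)|)) :
    ∀ n : ℕ, ∑' j : ℤ, |U n (j + 1) - U n j| ≤ ∑' j : ℤ, |U 0 (j + 1) - U 0 j| := by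
  have hΓ : 0 < Real.Gamma (2 - α) := Real.Gamma_pos_of_pos (by linarith [hα.2])
  have hδ0 : 0 ≤ δ := by rw [hδ]; positivity
  have hfpm : Monotone fp := monotone_of_deriv_nonneg hfp hfp'
  have hfma : Antitone fm := antitone_of_deriv_nonpos hfm hfm'
  intro n
  induction n using Nat.strong_induction_on with
  | _ n ih =>
    match n with
    | 0 => exact le_refl _
    | Nat.succ m =>
      calc ∑' j : ℤ, |U (m+1) (j + 1) - U (m+1) j|
          ≤ ∑ k ∈ Finset.range (m+1), caputoCoeff α m k * ∑' j : ℤ, |U k (j+1) - U k j| :=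
            tv_step hα hδ0 hfpm hfma hU hsum hfpsum hfmsum m
        _ ≤ ∑ k ∈ Finset.range (m+1), caputoCoeff α m k * ∑' j : ℤ, |U 0 (j+1) - U 0 j| := by
            refine Finset.sum_le_sum fun k hk => ?_
            exact mul_le_mul_of_nonneg_left (ih k (Finset.mem_range.1 hk))
              (caputoCoeff_nonneg hα m (Nat.lt_succ_iff.1 (Finset.mem_range.1 hk)))
        _ = ∑' j : ℤ, |U 0 (j + 1) - U 0 j| := by
            rw [← Finset.sum_mul, caputoCoeff_sum hα m, one_mul]
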